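/- Let m ≥ 1, let P_r and P_c be probability mass functions on {1,…,m}, and let N ≥ 1, M ≥ 1 be integers. On a probability space carry a random request X distributed according to P_r, and random variables C_{j,s} for j ∈ {1,…,N}, s ∈ {1,…,M} (the s-th cached file of the j-th other user), each distributed according to P_c, with X and all the C_{j,s} mutually independent. Then the probability that the requested file is cached by at least one of the N other users satisfies P(∃ j ≤ N, ∃ s ≤ M : C_{j,s} = X) = ∑_{f=1}^m P_r(f)·(1 − (1 − P_c(f))^{N·M}). -/

import Mathlib

open MeasureTheory ProbabilityTheory

lemma nm_of_add_compl_le {Ω : Type*} [MeasurableSpace Ω] {μ : Measure Ω}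
    [IsProbabilityMeasure μ] {A : Set Ω} (h : μ A + μ Aᶜ ≤ 1) :
    NullMeasurableSet A μ := by
  set S := toMeasurable μ A with hS
  set T := toMeasurable μ Aᶜ with hT
  have hAS : A ⊆ S := subset_toMeasurable μ A
  have hAT : Aᶜ ⊆ T := subset_toMeasurable μ Aᶜ
  have hTA : Tᶜ ⊆ A := fun x hx => by
    by_contra hxA; exact hx (hAT hxA)
  have hST : S ∪ T = Set.univ := by
    apply Set.eq_univ_of_univ_subset
    intro x _
    by_cases hx : x ∈ A
    · exact Or.inl (hAS hx)
    · exact Or.inr (hAT hx)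
  have hmeasS : MeasurableSet S := measurableSet_toMeasurable μ A
  have hmeasT : MeasurableSet T := measurableSet_toMeasurable μ Aᶜ
  have h1 : μ (S ∩ T) = 0 := by
    have hie : μ (S ∪ T) + μ (S ∩ T) = μ S + μ T := measure_union_add_inter S hmeasT
    rw [hST, measure_univ, hS, hT, measure_toMeasurable, measure_toMeasurable] at hie
    have h2 : 1 + μ (S ∩ T) ≤ 1 + 0 := by rw [add_zero, hie]; exact h
    exact le_antisymm (ENNReal.le_of_add_le_add_left ENNReal.one_ne_top h2) (zero_le)
  have hae : A =ᵐ[μ] Tᶜ := by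
    refine (MeasureTheory.ae_eq_set (μ := μ) (s := A) (t := Tᶜ)).mpr ?_
    constructor
    · refine measure_mono_null ?_ h1
      intro x hx
      exact ⟨hAS hx.1, not_not.mp (fun hxT => hx.2 hxT)⟩
    · refine measure_mono_null ?_ (measure_empty (μ := μ))
      intro x hx
      exact absurd (hTA hx.1) hx.2
  exact hmeasT.compl.nullMeasurableSet.congr hae.symm

lemma nm_level {Ω : Type*} [MeasurableSpace Ω] {μ : Measure Ω}
    [IsProbabilityMeasure μ] {m : ℕ} {Q : Fin m → ℝ} (hQ : ∀ f, 0 ≤ Q f)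
    (hQs : ∑ f, Q f = 1) {Y : Ω → Fin m}
    (hY : ∀ f, μ {ω | Y ω = f} = ENNReal.ofReal (Q f)) (f : Fin m) :
    NullMeasurableSet {ω | Y ω = f} μ := by
  apply nm_of_add_compl_le
  have hcompl : {ω | Y ω = f}ᶜ = ⋃ g ∈ Finset.univ.erase f, {ω | Y ω = g} := by
    ext ω
    simp only [Set.mem_compl_iff, Set.mem_setOf_eq, Set.mem_iUnion, Finset.mem_erase,
      Finset.mem_univ, and_true, exists_prop]
    constructor
    · intro h; exact ⟨Y ω, h, rfl⟩
    · rintro ⟨g, hg, hYg⟩ hf; exact hg (hYg ▸ hf)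
  have hle : μ {ω | Y ω = f}ᶜ ≤ ∑ g ∈ Finset.univ.erase f, ENNReal.ofReal (Q g) := by
    rw [hcompl]
    refine le_trans (measure_biUnion_finset_le _ _) ?_
    exact Finset.sum_le_sum fun g _ => le_of_eq (hY g)
  calc μ {ω | Y ω = f} + μ {ω | Y ω = f}ᶜ
      ≤ ENNReal.ofReal (Q f) + ∑ g ∈ Finset.univ.erase f, ENNReal.ofReal (Q g) := by
        rw [hY f]; exact add_le_add_right hle _
    _ = ∑ g, ENNReal.ofReal (Q g) := Finset.add_sum_erase _ (fun g => ENNReal.ofReal (Q g)) (Finset.mem_univ f)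
    _ = ENNReal.ofReal (∑ g, Q g) := (ENNReal.ofReal_sum_of_nonneg fun g _ => hQ g).symm
    _ = 1 := by rw [hQs, ENNReal.ofReal_one]

/-- **Cache-hit probability under independent random caching.**
A request `X ~ P_r` and the `N·M` cached files `C j s ~ P_c` (the `s`-th cached file of the
`j`-th other user) are mutually independent, all taking values in `{1,…,m}`.  Then the
probability that the requested file is cached by at least one of the `N` other users is
`∑ f, P_r f * (1 − (1 − P_c f) ^ (N·M))`. -/
theorem random_caching_hit_probability
    {Ω : Type*} [MeasurableSpace Ω] (μ : Measure Ω) [IsProbabilityMeasure μ]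
    (m N M : ℕ) (hm : 1 ≤ m) (hN : 1 ≤ N) (hM : 1 ≤ M)
    (Pr Pc : Fin m → ℝ)
    (hPr : ∀ f, 0 ≤ Pr f) (hPrsum : ∑ f, Pr f = 1)
    (hPc : ∀ f, 0 ≤ Pc f) (hPcsum : ∑ f, Pc f = 1)
    (X : Ω → Fin m) (C : Fin N → Fin M → Ω → Fin m)
    (hindep : iIndepFun (m := fun _ : Option (Fin N × Fin M) => inferInstance)
      (fun i => Option.elim i X (fun p => C p.1 p.2)) μ)
    (hXdist : ∀ f, μ {ω | X ω = f} = ENNReal.ofReal (Pr f))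
    (hCdist : ∀ j s f, μ {ω | C j s ω = f} = ENNReal.ofReal (Pc f)) :
    μ {ω | ∃ j, ∃ s, C j s ω = X ω} =
      ENNReal.ofReal (∑ f, Pr f * (1 - (1 - Pc f) ^ (N * M))) := by
  set A : Fin m → Set Ω := fun f => {ω | X ω = f} with hA
  set D : Fin m → Set Ω := fun f => {ω | ∃ j, ∃ s, C j s ω = f} with hD
  have hPc1 : ∀ f, Pc f ≤ 1 := by
    intro f
    rw [← hPcsum]
    exact Finset.single_le_sum (fun g _ => hPc g) (Finset.mem_univ f)
  have hq0 : ∀ f, (0:ℝ) ≤ (1 - Pc f) ^ (N * M) :=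
    fun f => pow_nonneg (by linarith [hPc1 f]) _
  have hq1 : ∀ f, (1 - Pc f) ^ (N * M) ≤ 1 :=
    fun f => pow_le_one₀ (by linarith [hPc1 f]) (by linarith [hPc f])
  have hnmA : ∀ f, NullMeasurableSet (A f) μ := fun f => nm_level hPr hPrsum hXdist f
  have hnmC : ∀ j s g, NullMeasurableSet {ω | C j s ω = g} μ :=
    fun j s g => nm_level hPc hPcsum (hCdist j s) g
  have hnmD : ∀ f, NullMeasurableSet (D f) μ := by
    intro f
    have : D f = ⋃ j, ⋃ s, {ω | C j s ω = f} := by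
      ext ω; simp [hD]
    rw [this]
    exact NullMeasurableSet.iUnion fun j => NullMeasurableSet.iUnion fun s => hnmC j s f
  -- measure of {C j s ≠ f}
  have hCne : ∀ (j : Fin N) (s : Fin M) (f : Fin m),
      μ {ω | C j s ω ≠ f} = ENNReal.ofReal (1 - Pc f) := by
    intro j s f
    have h1 : {ω | C j s ω ≠ f} = {ω | C j s ω = f}ᶜ := rfl
    rw [h1, measure_compl₀ (hnmC j s f) (measure_ne_top μ _), measure_univ, hCdist j s f,
      ← ENNReal.ofReal_one, ← ENNReal.ofReal_sub _ (hPc f)]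
  -- the independence computation
  have hdiff : ∀ f : Fin m, μ (A f \ D f) =
      ENNReal.ofReal (Pr f * (1 - Pc f) ^ (N * M)) := by
    intro f
    have hmeas : ∀ i : Option (Fin N × Fin M),
        MeasurableSet[MeasurableSpace.comap
          (Option.elim i X (fun p => C p.1 p.2)) inferInstance]
          (Option.elim i (A f) (fun p => {ω | C p.1 p.2 ω ≠ f})) := by
      rintro (_ | p)
      · exact ⟨{f}, measurableSet_singleton f, rfl⟩
      · exact ⟨{f}ᶜ, (measurableSet_singleton f).compl, rfl⟩
    have hset : (⋂ i : Option (Fin N × Fin M),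
        Option.elim i (A f) (fun p => {ω | C p.1 p.2 ω ≠ f})) = A f \ D f := by
      ext ω
      simp only [Set.mem_iInter, Option.forall, Option.elim, Set.mem_diff, hA, hD,
        Set.mem_setOf_eq, not_exists, Prod.forall]
    have hprod := hindep.meas_iInter hmeas
    rw [hset] at hprod
    rw [hprod, Fintype.prod_option]
    simp only [Option.elim]
    rw [hXdist f]
    have : ∀ p : Fin N × Fin M, μ {ω | C p.1 p.2 ω ≠ f} = ENNReal.ofReal (1 - Pc f) :=
      fun p => hCne p.1 p.2 f
    rw [Finset.prod_congr rfl fun p _ => this p, Finset.prod_const, Finset.card_univ,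
      Fintype.card_prod, Fintype.card_fin, Fintype.card_fin,
      ← ENNReal.ofReal_pow (by linarith [hPc1 f]),
      ← ENNReal.ofReal_mul (hPr f)]
  -- measure of A f ∩ D f
  have hBf : ∀ f : Fin m, μ (A f ∩ D f) =
      ENNReal.ofReal (Pr f * (1 - (1 - Pc f) ^ (N * M))) := by
    intro f
    have hadd : μ (A f ∩ D f) + μ (A f \ D f) = μ (A f) :=
      measure_inter_add_diff₀ (A f) (hnmD f)
    rw [hdiff f, hXdist f] at hadd
    have := ENNReal.eq_sub_of_add_eq (by exact ENNReal.ofReal_ne_top) hadd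
    rw [this, ← ENNReal.ofReal_sub _ (mul_nonneg (hPr f) (hq0 f))]
    ring_nf
  -- decompose the main event
  have hS : {ω | ∃ j, ∃ s, C j s ω = X ω} = ⋃ f, (A f ∩ D f) := by
    ext ω
    simp only [Set.mem_setOf_eq, Set.mem_iUnion, Set.mem_inter_iff, hA, hD, Set.mem_setOf_eq]
    constructor
    · rintro ⟨j, s, h⟩; exact ⟨X ω, rfl, j, s, h⟩
    · rintro ⟨f, hXf, j, s, h⟩; exact ⟨j, s, by rw [h, hXf]⟩
  rw [hS, measure_iUnion₀ ?_ (fun f => (hnmA f).inter (hnmD f))]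
  · rw [tsum_fintype]
    rw [Finset.sum_congr rfl fun f _ => hBf f]
    exact (ENNReal.ofReal_sum_of_nonneg fun f _ =>
      mul_nonneg (hPr f) (by linarith [hq1 f])).symm
  · intro f g hfg
    refine (Set.disjoint_left.2 ?_).aedisjoint
    rintro ω ⟨hXf, -⟩ ⟨hXg, -⟩
    exact hfg (hXf ▸ hXg)
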